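/- arXiv:1810.05279 — 3 statements merged into one kernel-verified Lean document; each statement's English description precedes it below -/
import Mathlib

section
/- Every connected component of the niche graph of a bipartite tournament has diameter at most 2. -/
structure BipTournament (α : Type*) where
  U : Set α
  V : Set α
  A : α → α → Prop
  disj : Disjoint U V
  cover : U ∪ V = Set.univ
  orient : ∀ u ∈ U, ∀ v ∈ V, Xor' (A u v) (A v u)
  arcs : ∀ x y, A x y → (x ∈ U ∧ y ∈ V) ∨ (x ∈ V ∧ y ∈ U)

def BipTournament.outN {α : Type*} (D : BipTournament α) (x : α) : Set α := {y | D.A x y}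

def BipTournament.inN {α : Type*} (D : BipTournament α) (x : α) : Set α := {y | D.A y x}

def BipTournament.niche {α : Type*} (D : BipTournament α) : SimpleGraph α where
  Adj x y := x ≠ y ∧ ((∃ w, D.A x w ∧ D.A y w) ∨ (∃ w, D.A w x ∧ D.A w y))
  symm := by
    constructor
    rintro x y ⟨h, h'⟩
    exact ⟨h.symm, h'.imp (fun ⟨w, a, b⟩ => ⟨w, b, a⟩) (fun ⟨w, a, b⟩ => ⟨w, b, a⟩)⟩
  loopless := ⟨fun x h => h.1 rfl⟩

private lemma notV {α : Type*} (D : BipTournament α) {x : α} (hx : x ∈ D.U) : x ∉ D.V :=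
  Set.disjoint_left.mp D.disj hx

private lemma arcUV {α : Type*} (D : BipTournament α) {x w : α} (hx : x ∈ D.U)
    (h : D.A x w ∨ D.A w x) : w ∈ D.V := by
  rcases h with h | h
  · rcases D.arcs _ _ h with ⟨_, hw⟩ | ⟨hx', _⟩
    · exact hw
    · exact absurd hx' (notV D hx)
  · rcases D.arcs _ _ h with ⟨_, hx'⟩ | ⟨hw, _⟩
    · exact absurd hx' (notV D hx)
    · exact hw

private lemma adjU {α : Type*} (D : BipTournament α) {x y : α} (h : D.niche.Adj x y)
    (hx : x ∈ D.U) : y ∈ D.U := by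
  obtain ⟨-, ⟨w, h1, h2⟩ | ⟨w, h1, h2⟩⟩ := h
  · have hw : w ∈ D.V := arcUV D hx (Or.inl h1)
    rcases D.arcs _ _ h2 with ⟨hy, _⟩ | ⟨_, hw'⟩
    · exact hy
    · exact absurd hw (notV D hw')
  · have hw : w ∈ D.V := arcUV D hx (Or.inr h1)
    rcases D.arcs _ _ h2 with ⟨hw', _⟩ | ⟨_, hy⟩
    · exact absurd hw (notV D hw')
    · exact hy

private lemma reachU {α : Type*} (D : BipTournament α) {u v : α}
    (h : D.niche.Reachable u v) (hu : u ∈ D.U) : v ∈ D.U := by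
  obtain ⟨p⟩ := h
  induction p with
  | nil => exact hu
  | cons h p ih => exact ih (adjU D h hu)

private lemma key {α : Type*} (D : BipTournament α) {u v : α} (hu : u ∈ D.U) (hv : v ∈ D.U)
    (hne : u ≠ v) (hnadj : ¬ D.niche.Adj u v) {w0 : α} (harc0 : D.A u w0 ∨ D.A w0 u) :
    ∀ a c, D.niche.Walk a c → c = v → a ∈ D.U → (∀ w ∈ D.V, (D.A a w ↔ D.A u w)) →
      ∃ x, D.niche.Adj u x ∧ D.niche.Adj x v := by
  have hw0 : w0 ∈ D.V := arcUV D hu harc0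
  have f1 : ∀ w ∈ D.V, D.A u w → D.A w v := by
    intro w hw h
    have hnv : ¬ D.A v w := fun hv' => hnadj ⟨hne, Or.inl ⟨w, h, hv'⟩⟩
    rcases D.orient v hv w hw with ⟨h1, _⟩ | ⟨h1, _⟩
    · exact absurd h1 hnv
    · exact h1
  have f2 : ∀ w ∈ D.V, D.A w u → D.A v w := by
    intro w hw h
    have hnv : ¬ D.A w v := fun hv' => hnadj ⟨hne, Or.inr ⟨w, h, hv'⟩⟩
    rcases D.orient v hv w hw with ⟨h1, _⟩ | ⟨h1, _⟩
    · exact h1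
    · exact absurd h1 hnv
  intro a c p
  induction p with
  | nil =>
    intro he _ hagr
    rw [he] at hagr
    rcases D.orient u hu w0 hw0 with ⟨h1, h2⟩ | ⟨h1, h2⟩
    · have : D.A v w0 := (hagr w0 hw0).mpr h1
      exact absurd (f1 w0 hw0 h1) (by
        rcases D.orient v hv w0 hw0 with ⟨_, hx⟩ | ⟨_, _⟩
        · exact hx
        · exact absurd this ‹¬ D.A v w0›)
    · have hnv : ¬ D.A v w0 := fun hv' => h2 ((hagr w0 hw0).mp hv')
      have : D.A w0 v := by
        rcases D.orient v hv w0 hw0 with ⟨hx, _⟩ | ⟨hx, _⟩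
        · exact absurd hx hnv
        · exact hx
      exact absurd (⟨hne, Or.inr ⟨w0, h1, this⟩⟩ : D.niche.Adj u v) hnadj
  | @cons a b c h p ih =>
    intro he ha hagr
    have hb : b ∈ D.U := adjU D h ha
    by_cases hbu : b = u
    · exact ih he hb (fun w hw => by rw [hbu])
    -- b is adjacent to u
    have hub : D.niche.Adj u b := by
      obtain ⟨-, ⟨w, h1, h2⟩ | ⟨w, h1, h2⟩⟩ := h
      · have hw : w ∈ D.V := arcUV D ha (Or.inl h1)
        exact ⟨Ne.symm hbu, Or.inl ⟨w, (hagr w hw).mp h1, h2⟩⟩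
      · have hw : w ∈ D.V := arcUV D ha (Or.inr h1)
        have hnu : ¬ D.A u w := by
          intro hx
          have : D.A a w := (hagr w hw).mpr hx
          rcases D.orient a ha w hw with ⟨_, h4⟩ | ⟨_, h4⟩
          · exact h4 h1
          · exact h4 this
        have hwu : D.A w u := by
          rcases D.orient u hu w hw with ⟨hx, _⟩ | ⟨hx, _⟩
          · exact absurd hx hnu
          · exact hx
        exact ⟨Ne.symm hbu, Or.inr ⟨w, hwu, h2⟩⟩
    by_cases hbv : D.niche.Adj b v
    · exact ⟨b, hub, hbv⟩
    have hbnev : b ≠ v := fun e => hnadj (e ▸ hub)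
    refine ih he hb ?_
    intro w' hw'
    constructor
    · intro hbw
      by_contra hnu
      have hwu : D.A w' u := by
        rcases D.orient u hu w' hw' with ⟨hx, _⟩ | ⟨hx, _⟩
        · exact absurd hx hnu
        · exact hx
      exact hbv ⟨hbnev, Or.inl ⟨w', hbw, f2 w' hw' hwu⟩⟩
    · intro huw
      by_contra hnb
      have hwb : D.A w' b := by
        rcases D.orient b hb w' hw' with ⟨hx, _⟩ | ⟨hx, _⟩
        · exact absurd hx hnb
        · exact hx
      exact hbv ⟨hbnev, Or.inr ⟨w', hwb, f1 w' hw' huw⟩⟩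

def BipTournament.swap {α : Type*} (D : BipTournament α) : BipTournament α where
  U := D.V
  V := D.U
  A := D.A
  disj := D.disj.symm
  cover := by rw [Set.union_comm]; exact D.cover
  orient := fun u hu v hv => Or.symm (D.orient v hv u hu)
  arcs := fun x y h => Or.symm (D.arcs x y h)

private lemma swap_niche {α : Type*} (D : BipTournament α) : D.swap.niche = D.niche := rfl

private lemma main {α : Type*} (D : BipTournament α) {u v : α} (hu : u ∈ D.U)
    (hne : u ≠ v) (hnadj : ¬ D.niche.Adj u v) (hreach : D.niche.Reachable u v) :
    D.niche.dist u v ≤ 2 := by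
  have hv : v ∈ D.U := reachU D hreach hu
  obtain ⟨p⟩ := hreach
  obtain ⟨w0, harc0⟩ : ∃ w0, D.A u w0 ∨ D.A w0 u := by
    cases p with
    | nil => exact absurd rfl hne
    | cons h p =>
      obtain ⟨-, ⟨w, h1, _⟩ | ⟨w, h1, _⟩⟩ := h
      · exact ⟨w, Or.inl h1⟩
      · exact ⟨w, Or.inr h1⟩
  obtain ⟨x, h1, h2⟩ := key D hu hv hne hnadj harc0 u v p rfl hu (fun w _ => Iff.rfl)
  calc D.niche.dist u v ≤ (h1.toWalk.append h2.toWalk).length := SimpleGraph.dist_le _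
    _ = 2 := by simp

theorem stmt10 {α : Type*} (D : BipTournament α) :
    ∀ u v : α, D.niche.Reachable u v → D.niche.dist u v ≤ 2 := by
  intro u v hreach
  by_cases huv : u = v
  · subst huv
    simp [SimpleGraph.dist_self]
  by_cases hadj : D.niche.Adj u v
  · calc D.niche.dist u v ≤ hadj.toWalk.length := SimpleGraph.dist_le _
      _ ≤ 2 := by simp
  have hUV : u ∈ D.U ∪ D.V := D.cover ▸ Set.mem_univ u
  rcases hUV with hu | hu
  · exact main D hu huv hadj hreach
  · exact main D.swap (hu : u ∈ D.swap.U) huv hadj hreach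
end

section
/- If G is the niche graph of a bipartite tournament, then the complement of G has diameter at most 2 (any two distinct vertices of the complement are at distance at most 2). -/
/-- A vertex in `U` and a vertex in `V` are adjacent in the complement of the niche graph. -/
lemma BipTournament.cross_adj {α : Type*} (D : BipTournament α) {u v : α}
    (hu : u ∈ D.U) (hv : v ∈ D.V) : (D.niche)ᶜ.Adj u v := by
  have hne : u ≠ v := fun h => D.disj.le_bot ⟨hu, h ▸ hv⟩
  refine ⟨hne, ?_⟩
  rintro ⟨-, ⟨w, a, b⟩ | ⟨w, a, b⟩⟩
  · rcases D.arcs u w a with ⟨-, hwV⟩ | ⟨huV, -⟩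
    · rcases D.arcs v w b with ⟨hvU, -⟩ | ⟨-, hwU⟩
      · exact D.disj.le_bot ⟨hvU, hv⟩
      · exact D.disj.le_bot ⟨hwU, hwV⟩
    · exact D.disj.le_bot ⟨hu, huV⟩
  · rcases D.arcs w u a with ⟨hwU, huV⟩ | ⟨hwV, -⟩
    · exact D.disj.le_bot ⟨hu, huV⟩
    · rcases D.arcs w v b with ⟨hwU, -⟩ | ⟨-, hvU⟩
      · exact D.disj.le_bot ⟨hwU, hwV⟩
      · exact D.disj.le_bot ⟨hvU, hv⟩

theorem stmt11 {α : Type*} (D : BipTournament α) (hU : D.U.Nonempty) (hV : D.V.Nonempty) :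
    ∀ u v : α, u ≠ v → (D.niche)ᶜ.Reachable u v ∧ (D.niche)ᶜ.dist u v ≤ 2 := by
  intro u v huv
  have hcover : ∀ x : α, x ∈ D.U ∨ x ∈ D.V := fun x => by
    have : x ∈ D.U ∪ D.V := D.cover ▸ Set.mem_univ x
    exact this
  obtain ⟨a, ha⟩ := hU
  obtain ⟨b, hb⟩ := hV
  have walk2 : ∀ w : α, (D.niche)ᶜ.Adj u w → (D.niche)ᶜ.Adj w v →
      (D.niche)ᶜ.Reachable u v ∧ (D.niche)ᶜ.dist u v ≤ 2 := by
    intro w h1 h2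
    refine ⟨⟨h1.toWalk.append h2.toWalk⟩, ?_⟩
    calc (D.niche)ᶜ.dist u v ≤ (h1.toWalk.append h2.toWalk).length := SimpleGraph.dist_le _
      _ = 2 := by simp
  have walk1 : (D.niche)ᶜ.Adj u v → (D.niche)ᶜ.Reachable u v ∧ (D.niche)ᶜ.dist u v ≤ 2 := by
    intro h
    exact ⟨h.reachable, le_trans (SimpleGraph.dist_le h.toWalk) (by simp)⟩
  rcases hcover u with hu | hu <;> rcases hcover v with hv | hv
  · -- both in U: go through b ∈ V
    exact walk2 b (D.cross_adj hu hb) ((D.cross_adj hv hb).symm)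
  · exact walk1 (D.cross_adj hu hv)
  · exact walk1 ((D.cross_adj hv hu).symm)
  · -- both in V: go through a ∈ U
    exact walk2 a ((D.cross_adj ha hu).symm) (D.cross_adj ha hv)
end

section
/- Let G be the niche graph of a bipartite tournament D with bipartition (U,V), and suppose the induced subgraph G[U] has exactly two connected components X₁ and X₂. Then X₁ and X₂ are complete graphs, and for any x ∈ V(X₁) and y ∈ V(X₂), V(X₁) = {z ∈ V(D) : N⁺_D(z) = N⁺_D(x)} and V(X₂) = {z ∈ V(D) : N⁺_D(z) = N⁺_D(y)}. -/
theorem stmt14 {α : Type*} (D : BipTournament α) (hU : D.U.Nonempty) (hV : D.V.Nonempty)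
    (S₁ S₂ : Set α) (h1 : S₁.Nonempty) (h2 : S₂.Nonempty) (hdisj : Disjoint S₁ S₂)
    (hcup : S₁ ∪ S₂ = D.U)
    (hno : ∀ x ∈ S₁, ∀ y ∈ S₂, ¬ D.niche.Adj x y)
    (hc1 : (D.niche.induce S₁).Connected) (hc2 : (D.niche.induce S₂).Connected) :
    (∀ x ∈ S₁, ∀ y ∈ S₁, x ≠ y → D.niche.Adj x y) ∧
    (∀ x ∈ S₂, ∀ y ∈ S₂, x ≠ y → D.niche.Adj x y) ∧
    (∀ x ∈ S₁, ∀ y ∈ S₂,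
      S₁ = {z | D.outN z = D.outN x} ∧ S₂ = {z | D.outN z = D.outN y}) := by
  obtain ⟨x₀, hx₀⟩ := h1
  obtain ⟨y₀, hy₀⟩ := h2
  obtain ⟨w₀, hw₀⟩ := hV
  have hS1U : S₁ ⊆ D.U := hcup ▸ Set.subset_union_left
  have hS2U : S₂ ⊆ D.U := hcup ▸ Set.subset_union_right
  have hUV : ∀ a, a ∈ D.U → a ∉ D.V :=
    fun a ha hav => (Set.disjoint_left.mp D.disj ha) hav
  -- Step A: a vertex of S₁ and a vertex of S₂ have complementary out-neighborhoods in V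
  have stepA : ∀ x ∈ S₁, ∀ y ∈ S₂, ∀ w ∈ D.V, (D.A x w ↔ ¬ D.A y w) := by
    intro x hx y hy w hw
    have hne : x ≠ y := fun h => (Set.disjoint_left.mp hdisj hx) (h ▸ hy)
    have hadj := hno x hx y hy
    constructor
    · intro hxw hyw
      exact hadj ⟨hne, Or.inl ⟨w, hxw, hyw⟩⟩
    · intro hnyw
      by_contra hnxw
      have hwx : D.A w x := by
        rcases D.orient x (hS1U hx) w hw with ⟨a, _⟩ | ⟨a, _⟩
        · exact absurd a hnxw
        · exact a
      have hwy : D.A w y := by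
        rcases D.orient y (hS2U hy) w hw with ⟨a, _⟩ | ⟨a, _⟩
        · exact absurd a hnyw
        · exact a
      exact hadj ⟨hne, Or.inr ⟨w, hwx, hwy⟩⟩
  -- out-neighbors of U-vertices lie in V
  have memV : ∀ x ∈ D.U, ∀ w, D.A x w → w ∈ D.V := by
    intro x hx w h
    rcases D.arcs x w h with ⟨_, h2⟩ | ⟨h1, _⟩
    · exact h2
    · exact absurd h1 (hUV x hx)
  -- all vertices of S₁ share the same out-neighborhood
  have char1 : ∀ x ∈ S₁, D.outN x = {w | w ∈ D.V ∧ ¬ D.A y₀ w} := by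
    intro x hx
    ext w
    simp only [BipTournament.outN, Set.mem_setOf_eq]
    constructor
    · intro h
      have hwV := memV x (hS1U hx) w h
      exact ⟨hwV, (stepA x hx y₀ hy₀ w hwV).mp h⟩
    · intro ⟨hwV, h⟩
      exact (stepA x hx y₀ hy₀ w hwV).mpr h
  have char2 : ∀ y ∈ S₂, D.outN y = {w | w ∈ D.V ∧ ¬ D.A x₀ w} := by
    intro y hy
    ext w
    simp only [BipTournament.outN, Set.mem_setOf_eq]
    constructor
    · intro h
      have hwV := memV y (hS2U hy) w h
      refine ⟨hwV, fun hx₀w => ?_⟩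
      exact (stepA x₀ hx₀ y hy w hwV).mp hx₀w h
    · intro ⟨hwV, h⟩
      by_contra hny
      exact h ((stepA x₀ hx₀ y hy w hwV).mpr hny)
  have mov : ∀ a b w, D.outN a = D.outN b → D.A a w → D.A b w :=
    fun a b w he h => (Set.ext_iff.mp he w).mp h
  -- two distinct U-vertices with equal out-neighborhoods are adjacent
  have complete : ∀ x ∈ D.U, ∀ y ∈ D.U, x ≠ y → D.outN x = D.outN y →
      D.niche.Adj x y := by
    intro x hx y hy hne heq
    rcases D.orient x hx w₀ hw₀ with ⟨a, _⟩ | ⟨a, _⟩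
    · have : D.A y w₀ := mov x y w₀ heq a
      exact ⟨hne, Or.inl ⟨w₀, a, this⟩⟩
    · have hnx : ¬ D.A x w₀ := by
        intro h
        rcases D.orient x hx w₀ hw₀ with ⟨_, b⟩ | ⟨_, b⟩
        · exact b a
        · exact b h
      have hny : ¬ D.A y w₀ := fun h => hnx (mov y x w₀ heq.symm h)
      have hwy : D.A w₀ y := by
        rcases D.orient y hy w₀ hw₀ with ⟨b, _⟩ | ⟨b, _⟩
        · exact absurd b hny
        · exact b
      exact ⟨hne, Or.inr ⟨w₀, a, hwy⟩⟩
  -- the out-neighborhood equality classes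
  have eqclass1 : ∀ x ∈ S₁, S₁ = {z | D.outN z = D.outN x} := by
    intro x hx
    ext z
    simp only [Set.mem_setOf_eq]
    constructor
    · intro hz
      rw [char1 z hz, char1 x hx]
    · intro hz
      have hzU : z ∈ D.U ∨ z ∈ D.V := by
        have : z ∈ D.U ∪ D.V := D.cover ▸ Set.mem_univ z
        exact this
      rcases hzU with hzU | hzV
      · have : z ∈ S₁ ∪ S₂ := hcup ▸ hzU
        rcases this with h | h
        · exact h
        · -- z ∈ S₂ : contradiction via w₀
          exfalso
          have h1 := stepA x hx z h w₀ hw₀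
          have h2 : D.A z w₀ ↔ D.A x w₀ :=
            ⟨mov z x w₀ hz, mov x z w₀ hz.symm⟩
          rcases D.orient x (hS1U hx) w₀ hw₀ with ⟨a, _⟩ | ⟨a, b⟩
          · exact h1.mp a (h2.mpr a)
          · have hnx : ¬ D.A x w₀ := fun h => (D.orient x (hS1U hx) w₀ hw₀).elim
              (fun p => p.2 a) (fun p => p.2 h)
            exact hnx ((h1.mpr (fun hzw => hnx (h2.mp hzw))))
      · -- z ∈ V : contradiction via arc between x and z
        exfalso
        rcases D.orient x (hS1U hx) z hzV with ⟨a, _⟩ | ⟨a, _⟩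
        · have : D.A z z := mov x z z hz.symm a
          rcases D.arcs z z this with ⟨p, q⟩ | ⟨p, q⟩
          · exact hUV z p q
          · exact hUV z q p
        · have : D.A x x := mov z x x hz a
          rcases D.arcs x x this with ⟨p, q⟩ | ⟨p, q⟩
          · exact hUV x p q
          · exact hUV x q p
  have eqclass2 : ∀ y ∈ S₂, S₂ = {z | D.outN z = D.outN y} := by
    intro y hy
    ext z
    simp only [Set.mem_setOf_eq]
    constructor
    · intro hz
      rw [char2 z hz, char2 y hy]
    · intro hz
      have hzU : z ∈ D.U ∨ z ∈ D.V := by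
        have : z ∈ D.U ∪ D.V := D.cover ▸ Set.mem_univ z
        exact this
      rcases hzU with hzU | hzV
      · have : z ∈ S₁ ∪ S₂ := hcup ▸ hzU
        rcases this with h | h
        · -- z ∈ S₁ : contradiction
          exfalso
          have h1 := stepA z h y hy w₀ hw₀
          have h2 : D.A z w₀ ↔ D.A y w₀ :=
            ⟨mov z y w₀ hz, mov y z w₀ hz.symm⟩
          rcases D.orient y (hS2U hy) w₀ hw₀ with ⟨a, _⟩ | ⟨a, b⟩
          · exact h1.mp (h2.mpr a) a
          · have hny : ¬ D.A y w₀ := fun h => (D.orient y (hS2U hy) w₀ hw₀).elim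
              (fun p => p.2 a) (fun p => p.2 h)
            exact hny (h2.mp (h1.mpr hny))
        · exact h
      · exfalso
        rcases D.orient y (hS2U hy) z hzV with ⟨a, _⟩ | ⟨a, _⟩
        · have : D.A z z := mov y z z hz.symm a
          rcases D.arcs z z this with ⟨p, q⟩ | ⟨p, q⟩
          · exact hUV z p q
          · exact hUV z q p
        · have : D.A y y := mov z y y hz a
          rcases D.arcs y y this with ⟨p, q⟩ | ⟨p, q⟩
          · exact hUV y p q
          · exact hUV y q p
  refine ⟨?_, ?_, ?_⟩
  · intro x hx y hy hne
    exact complete x (hS1U hx) y (hS1U hy) hne (by rw [char1 x hx, char1 y hy])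
  · intro x hx y hy hne
    exact complete x (hS2U hx) y (hS2U hy) hne (by rw [char2 x hx, char2 y hy])
  · intro x hx y hy
    exact ⟨eqclass1 x hx, eqclass2 y hy⟩
end
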